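/- Let m ≥ 2 be even, let V be a set of m elements, let w assign a nonnegative real w(u,v) to each unordered pair of distinct elements of V, and let M be a perfect matching on V. Then Σ over unordered pairs {u,v} of distinct elements of V not belonging to M of w(u,v) ≤ (m−2)·max over perfect matchings M' on V of Σ_{{u,v}∈M'} w(u,v). -/

import Mathlib

open Finset

/-- A hierarchical clustering tree: a rooted binary tree with leaves labelled by vertices. -/
inductive HC (V : Type*) where
  | leaf : V → HC V
  | node : HC V → HC V → HC V

namespace HC

variable {V : Type*}

/-- The list of leaf labels of a tree, left to right. -/
def leafList : HC V → List V
  | .leaf v => [v]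
  | .node l r => leafList l ++ leafList r

/-- The set of leaf labels of a tree. -/
def leaves [DecidableEq V] (t : HC V) : Finset V :=
  t.leafList.toFinset

/-- `t.cluster i j` is the leaf set of the subtree of `t` rooted at the least common
ancestor of the leaves `i` and `j` (i.e. `leaves(T[i ∨ j])`). -/
def cluster [DecidableEq V] : HC V → V → V → Finset V
  | .leaf v, _, _ => {v}
  | .node l r, i, j =>
    if i ∈ l.leaves ∧ j ∈ l.leaves then l.cluster i j
    else if i ∈ r.leaves ∧ j ∈ r.leaves then r.cluster i j
    else (HC.node l r).leaves

/-- `t` is a hierarchical clustering tree on the whole vertex type `V`: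
its leaves are in bijection with `V`. -/
def IsTreeOn [Fintype V] [DecidableEq V] (t : HC V) : Prop :=
  t.leafList.Nodup ∧ t.leaves = Finset.univ

/-- Sum of `f A B` over all internal nodes of the tree, where `A`, `B` are the
leaf sets of the two children of the internal node. -/
def internalSum [DecidableEq V] (f : Finset V → Finset V → ℝ) : HC V → ℝ
  | .leaf _ => 0
  | .node l r => f l.leaves r.leaves + internalSum f l + internalSum f r

/-- The list of all subtrees of a tree. -/
def subtreesList : HC V → List (HC V)
  | .leaf v => [.leaf v]
  | .node l r => .node l r :: (subtreesList l ++ subtreesList r)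

/-- Dasgupta's cost: sum over unordered pairs `{i,j}` of distinct vertices of
`w i j * |leaves(T[i ∨ j])|`. -/
noncomputable def cost [Fintype V] [DecidableEq V] (w : V → V → ℝ) (t : HC V) : ℝ :=
  (1 / 2) * ∑ p ∈ Finset.univ.offDiag, w p.1 p.2 * ((t.cluster p.1 p.2).card : ℝ)

/-- Moseley–Wang revenue: sum over unordered pairs `{i,j}` of distinct vertices of
`w i j * |nonleaves(T[i ∨ j])|`. -/
noncomputable def rev [Fintype V] [DecidableEq V] (w : V → V → ℝ) (t : HC V) : ℝ :=
  (1 / 2) * ∑ p ∈ Finset.univ.offDiag,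
    w p.1 p.2 * ((Finset.univ \ t.cluster p.1 p.2).card : ℝ)

/-- Cohen-Addad et al.'s value: the same formula as cost, used for dissimilarity weights. -/
noncomputable def val [Fintype V] [DecidableEq V] (w : V → V → ℝ) (t : HC V) : ℝ :=
  cost w t

end HC

/-- The total weight `W`: the sum of `w i j` over unordered pairs of distinct vertices. -/
noncomputable def totalWeight {V : Type*} [Fintype V] [DecidableEq V] (w : V → V → ℝ) : ℝ :=
  (1 / 2) * ∑ p ∈ Finset.univ.offDiag, w p.1 p.2

/-- The merge cost of merging disjoint clusters `A` and `B`. -/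
noncomputable def mergeCost {V : Type*} [Fintype V] [DecidableEq V] (w : V → V → ℝ) (A B : Finset V) : ℝ :=
  (B.card : ℝ) * ∑ a ∈ A, ∑ c ∈ Finset.univ \ (A ∪ B), w a c
    + (A.card : ℝ) * ∑ b ∈ B, ∑ c ∈ Finset.univ \ (A ∪ B), w b c

/-- The merge revenue of merging disjoint clusters `A` and `B`. -/
noncomputable def mergeRev {V : Type*} [Fintype V] (w : V → V → ℝ) (A B : Finset V) : ℝ :=
  ((Fintype.card V : ℝ) - (A.card : ℝ) - (B.card : ℝ)) * ∑ a ∈ A, ∑ b ∈ B, w a b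

/-- The average linkage between disjoint nonempty clusters `A` and `B`. -/
noncomputable def avgLinkage {V : Type*} (w : V → V → ℝ) (A B : Finset V) : ℝ :=
  (1 / ((A.card : ℝ) * (B.card : ℝ))) * ∑ a ∈ A, ∑ b ∈ B, w a b

/-- A matching encoded as an involution `f : V → V`: the matched pairs are the pairs
`{v, f v}` with `f v ≠ v`; its weight is the sum of weights of matched pairs. -/
noncomputable def matchingWeight {V : Type*} [Fintype V] [DecidableEq V] (w : V → V → ℝ) (f : V → V) : ℝ :=
  (1 / 2) * ∑ v ∈ Finset.univ.filter (fun v => f v ≠ v), w v (f v)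

/-- A perfect matching encoded as a fixed-point-free involution. -/
def IsPerfectMatching {V : Type*} (f : V → V) : Prop :=
  (∀ v, f (f v) = v) ∧ ∀ v, f v ≠ v




/-- Factor `k` of the round-robin 1-factorization of the complete graph on `Option (ZMod q)`. -/
def pmFactor {q : ℕ} (k : ZMod q) : Option (ZMod q) → Option (ZMod q)
  | none => some k
  | some x => if x = k then none else some (2 * k - x)

theorem pmFactor_invol {q : ℕ} (k : ZMod q) (a : Option (ZMod q)) :
    pmFactor k (pmFactor k a) = a := by
  match a with
  | none => simp [pmFactor]
  | some x =>
    by_cases h : x = k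
    · simp [pmFactor, h]
    · have h2 : 2 * k - x ≠ k := fun hh => h (by linear_combination -hh)
      simp only [pmFactor, if_neg h, if_neg h2, Option.some.injEq]
      ring

theorem pmFactor_ne {q : ℕ} (h2 : ∀ x : ZMod q, 2 * x = 0 → x = 0) (k : ZMod q)
    (a : Option (ZMod q)) : pmFactor k a ≠ a := by
  match a with
  | none => simp [pmFactor]
  | some x =>
    by_cases h : x = k
    · simp [pmFactor, h]
    · simp only [pmFactor, if_neg h, ne_eq, Option.some.injEq]
      intro hh
      exact h (sub_eq_zero.mp (h2 (k - x) (by linear_combination hh))).symm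

theorem pmFactor_exists {q : ℕ} (hdiv : ∀ z : ZMod q, ∃ c, 2 * c = z)
    {a b : Option (ZMod q)} (hab : a ≠ b) : ∃ k, pmFactor k a = b := by
  match a, b with
  | none, none => exact absurd rfl hab
  | none, some y => exact ⟨y, rfl⟩
  | some x, none => exact ⟨x, by simp [pmFactor]⟩
  | some x, some y =>
    obtain ⟨c, hc⟩ := hdiv (x + y)
    have hxy : x ≠ y := by simpa using hab
    have hxc : x ≠ c := by
      rintro rfl
      exact hxy (by linear_combination hc)
    exact ⟨c, by simp [pmFactor, hxc]; linear_combination hc⟩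

theorem pmFactor_inj {q : ℕ} (h2 : ∀ x : ZMod q, 2 * x = 0 → x = 0)
    {a : Option (ZMod q)} {k k' : ZMod q} (h : pmFactor k a = pmFactor k' a) : k = k' := by
  match a with
  | none => simpa [pmFactor] using h
  | some x =>
    by_cases h1 : x = k <;> by_cases h1' : x = k' <;>
      simp only [pmFactor, if_pos, if_neg, h1, h1', ite_true, ite_false, if_neg] at h
    · exact h1 ▸ h1'
    · by_cases hk : k = k'
      · exact hk
      · rw [if_neg hk] at h; exact absurd h (by simp)
    · by_cases hk : k' = k
      · exact hk.symm
      · rw [if_neg hk] at h; exact absurd h (by simp)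
    · simp only [Option.some.injEq] at h
      exact sub_eq_zero.mp (h2 (k - k') (by linear_combination h))


theorem conj_aux {V W : Type*} [DecidableEq V] [DecidableEq W] [Nonempty W]
    (σ : V → V) (τ : W → W) (hσ1 : ∀ v, σ (σ v) = v) (hσ2 : ∀ v, σ v ≠ v)
    (hτ1 : ∀ u, τ (τ u) = u) (hτ2 : ∀ u, τ u ≠ u) :
    ∀ (n : ℕ) (s : Finset V) (t : Finset W), s.card = n → t.card = n →
      (∀ v ∈ s, σ v ∈ s) → (∀ u ∈ t, τ u ∈ t) →
      ∃ e : V → W, Set.InjOn e ↑s ∧ s.image e = t ∧ ∀ v ∈ s, e (σ v) = τ (e v) := by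
  intro n
  induction n using Nat.strong_induction_on with
  | _ n ih =>
  intro s t hs ht hsσ htτ
  rcases s.eq_empty_or_nonempty with rfl | ⟨v0, hv0⟩
  · have ht0 : t = ∅ := Finset.card_eq_zero.mp (by simp at hs; omega)
    exact ⟨fun _ => Classical.arbitrary W, by simp, by simp [ht0], by simp⟩
  · have htne : t.Nonempty := Finset.card_pos.mp
      (by rw [ht, ← hs]; exact Finset.card_pos.mpr ⟨v0, hv0⟩)
    obtain ⟨w0, hw0⟩ := htne
    have hv0' : σ v0 ∈ s := hsσ v0 hv0
    have hw0' : τ w0 ∈ t := htτ w0 hw0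
    have hvne : v0 ≠ σ v0 := (hσ2 v0).symm
    have hwne : w0 ≠ τ w0 := (hτ2 w0).symm
    set s' : Finset V := s \ {v0, σ v0} with hs'
    set t' : Finset W := t \ {w0, τ w0} with ht'
    have hsub : {v0, σ v0} ⊆ s := by
      intro x hx; rcases Finset.mem_insert.mp hx with rfl | hx
      · exact hv0
      · rw [Finset.mem_singleton.mp hx]; exact hv0'
    have htsub : {w0, τ w0} ⊆ t := by
      intro x hx; rcases Finset.mem_insert.mp hx with rfl | hx
      · exact hw0
      · rw [Finset.mem_singleton.mp hx]; exact hw0'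
    have hcard2 : ({v0, σ v0} : Finset V).card = 2 := Finset.card_pair hvne
    have htcard2 : ({w0, τ w0} : Finset W).card = 2 := Finset.card_pair hwne
    have hscard : s'.card = n - 2 := by
      rw [hs', Finset.card_sdiff_of_subset hsub, hcard2, hs]
    have htcard : t'.card = n - 2 := by
      rw [ht', Finset.card_sdiff_of_subset htsub, htcard2, ht]
    have hn2 : 2 ≤ n := by
      rw [← hs]; exact hcard2.symm.trans_le (Finset.card_le_card hsub)
    have hmem_s' : ∀ v, v ∈ s' ↔ v ∈ s ∧ v ≠ v0 ∧ v ≠ σ v0 := by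
      intro v; simp [hs', Finset.mem_sdiff, and_assoc, not_or]
    have hmem_t' : ∀ u, u ∈ t' ↔ u ∈ t ∧ u ≠ w0 ∧ u ≠ τ w0 := by
      intro u; simp [ht', Finset.mem_sdiff, and_assoc, not_or]
    have hs'σ : ∀ v ∈ s', σ v ∈ s' := by
      intro v hv
      rw [hmem_s'] at hv ⊢
      obtain ⟨hv1, hv2, hv3⟩ := hv
      refine ⟨hsσ v hv1, ?_, ?_⟩
      · intro h; exact hv3 (by rw [← h, hσ1])
      · intro h; exact hv2 (by have := congrArg σ h; rwa [hσ1, hσ1] at this)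
    have ht'τ : ∀ u ∈ t', τ u ∈ t' := by
      intro u hu
      rw [hmem_t'] at hu ⊢
      obtain ⟨hu1, hu2, hu3⟩ := hu
      refine ⟨htτ u hu1, ?_, ?_⟩
      · intro h; exact hu3 (by rw [← h, hτ1])
      · intro h; exact hu2 (by have := congrArg τ h; rwa [hτ1, hτ1] at this)
    obtain ⟨e', hinj', himg', hconj'⟩ :=
      ih (n - 2) (by omega) s' t' hscard htcard hs'σ ht'τ
    have he't' : ∀ v ∈ s', e' v ∈ t' := by
      intro v hv; rw [← himg']; exact Finset.mem_image_of_mem e' hv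
    set e : V → W := fun v => if v = v0 then w0 else if v = σ v0 then τ w0 else e' v with he
    have he1 : e v0 = w0 := by simp [he]
    have he2 : e (σ v0) = τ w0 := by
      simp [he, Ne.symm hvne]
    have he3 : ∀ v ∈ s', e v = e' v := by
      intro v hv
      obtain ⟨-, h1, h2⟩ := (hmem_s' v).mp hv
      simp [he, h1, h2]
    have hch : ∀ v ∈ s, v = v0 ∨ v = σ v0 ∨ v ∈ s' := by
      intro v hv
      by_cases h1 : v = v0
      · exact Or.inl h1
      by_cases h2 : v = σ v0
      · exact Or.inr (Or.inl h2)
      exact Or.inr (Or.inr ((hmem_s' v).mpr ⟨hv, h1, h2⟩))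
    have hvals : ∀ v ∈ s', e v ≠ w0 ∧ e v ≠ τ w0 := by
      intro v hv
      rw [he3 v hv]
      have := (hmem_t' _).mp (he't' v hv)
      exact ⟨this.2.1, this.2.2⟩
    refine ⟨e, ?_, ?_, ?_⟩
    · -- InjOn
      intro a ha b hb hab
      simp only [Finset.mem_coe] at ha hb
      rcases hch a ha with rfl | rfl | ha' <;> rcases hch b hb with rfl | rfl | hb'
      · rfl
      · rw [he1, he2] at hab; exact absurd hab hwne
      · rw [he1] at hab; exact absurd hab.symm (hvals b hb').1
      · rw [he1, he2] at hab; exact absurd hab.symm hwne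
      · rfl
      · rw [he2] at hab; exact absurd hab.symm (hvals b hb').2
      · rw [he1] at hab; exact absurd hab (hvals a ha').1
      · rw [he2] at hab; exact absurd hab (hvals a ha').2
      · rw [he3 a ha', he3 b hb'] at hab
        exact hinj' (Finset.mem_coe.mpr ha') (Finset.mem_coe.mpr hb') hab
    · -- image
      apply Finset.eq_of_subset_of_card_le
      · intro u hu
        obtain ⟨v, hv, rfl⟩ := Finset.mem_image.mp hu
        rcases hch v hv with rfl | rfl | hv'
        · rw [he1]; exact hw0
        · rw [he2]; exact hw0'
        · rw [he3 v hv']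
          exact Finset.sdiff_subset (he't' v hv')
      · rw [ht, Finset.card_image_of_injOn, hs]
        intro a ha b hb hab
        simp only [Finset.mem_coe] at ha hb
        rcases hch a ha with rfl | rfl | ha' <;> rcases hch b hb with rfl | rfl | hb'
        · rfl
        · rw [he1, he2] at hab; exact absurd hab hwne
        · rw [he1] at hab; exact absurd hab.symm (hvals b hb').1
        · rw [he1, he2] at hab; exact absurd hab.symm hwne
        · rfl
        · rw [he2] at hab; exact absurd hab.symm (hvals b hb').2
        · rw [he1] at hab; exact absurd hab (hvals a ha').1
        · rw [he2] at hab; exact absurd hab (hvals a ha').2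
        · rw [he3 a ha', he3 b hb'] at hab
          exact hinj' (Finset.mem_coe.mpr ha') (Finset.mem_coe.mpr hb') hab
    · -- conjugation
      intro v hv
      rcases hch v hv with rfl | rfl | hv'
      · rw [he1, he2]
      · rw [hσ1, he1, he2, hτ1]
      · rw [he3 v hv', he3 (σ v) (hs'σ v hv'), hconj' v hv']

/-- For even `m ≥ 2`, a set `V` of `m` elements with a symmetric nonnegative weight
function `w`, and a perfect matching `σ` on `V`, the total weight of the unordered pairs
not in the matching is at most `(m − 2)` times the maximum weight of a perfect matching. -/
theorem stmt7 {V : Type*} [Fintype V] [DecidableEq V] (m : ℕ) (hm : 2 ≤ m)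
    (hm2 : Even m) (hcard : Fintype.card V = m)
    (w : V → V → ℝ) (hsymm : ∀ i j, w i j = w j i) (hnonneg : ∀ i j, 0 ≤ w i j)
    (σ : V → V) (hσ : IsPerfectMatching σ) :
    (1 / 2) * ∑ p ∈ Finset.univ.offDiag.filter (fun p : V × V => σ p.1 ≠ p.2), w p.1 p.2 ≤
      ((m : ℝ) - 2) * ⨆ M' : {f : V → V // IsPerfectMatching f}, matchingWeight w M'.1 := by
  obtain ⟨hσ1, hσ2⟩ := hσ
  haveI : NeZero (m - 1) := ⟨by omega⟩
  have hqodd : Odd (m - 1) := Nat.Even.sub_odd (by omega) hm2 odd_one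
  have hu : IsUnit (2 : ZMod (m - 1)) := by
    have h := (ZMod.isUnit_iff_coprime 2 (m - 1)).mpr hqodd.coprime_two_left
    simpa using h
  have h2 : ∀ x : ZMod (m - 1), 2 * x = 0 → x = 0 := fun x h =>
    hu.mul_left_cancel (by rw [h, mul_zero])
  have hdiv : ∀ z : ZMod (m - 1), ∃ c, 2 * c = z := fun z =>
    ⟨(hu.unit⁻¹ : (ZMod (m - 1))ˣ) * z, by
      rw [← mul_assoc, IsUnit.mul_val_inv, one_mul]⟩
  obtain ⟨e0, hinj, himg, hconj⟩ :=
    conj_aux σ (pmFactor (0 : ZMod (m - 1))) hσ1 hσ2 (pmFactor_invol 0) (pmFactor_ne h2 0)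
      m univ univ (by simp [hcard]) (by simp [ZMod.card]; omega)
      (fun v _ => mem_univ _) (fun u _ => mem_univ _)
  have hbij : Function.Bijective e0 := by
    constructor
    · rw [← Set.injOn_univ]
      rwa [Finset.coe_univ] at hinj
    · intro b
      have hb : b ∈ Finset.image e0 univ := by rw [himg]; exact mem_univ b
      obtain ⟨a, -, ha⟩ := Finset.mem_image.mp hb
      exact ⟨a, ha⟩
  set e : V ≃ Option (ZMod (m - 1)) := Equiv.ofBijective e0 hbij with hedef
  have hcj : ∀ v, e (σ v) = pmFactor 0 (e v) := fun v => hconj v (mem_univ v)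
  set g : ZMod (m - 1) → V → V := fun k v => e.symm (pmFactor k (e v)) with hg
  have hgval : ∀ k v, e (g k v) = pmFactor k (e v) := fun k v => by
    rw [hg]; exact e.apply_symm_apply _
  have hgpm : ∀ k, IsPerfectMatching (g k) := by
    intro k
    constructor
    · intro v
      have : e (g k (g k v)) = e v := by
        rw [hgval, hgval, pmFactor_invol]
      exact e.injective this
    · intro v h
      have : pmFactor k (e v) = e v := by rw [← hgval, h]
      exact pmFactor_ne h2 k (e v) this
  have hσg : ∀ v, σ v = g 0 v := fun v =>
    e.injective (by rw [hgval, hcj])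
  haveI : Finite {f : V → V // IsPerfectMatching f} := Subtype.finite
  set S := ⨆ M' : {f : V → V // IsPerfectMatching f}, matchingWeight w M'.1 with hS
  have hbdd : BddAbove (Set.range fun M' : {f : V → V // IsPerfectMatching f} =>
      matchingWeight w M'.1) := (Set.finite_range _).bddAbove
  have hle : ∀ k, matchingWeight w (g k) ≤ S := fun k =>
    le_ciSup hbdd ⟨g k, hgpm k⟩
  have key : ∑ p ∈ Finset.univ.offDiag.filter (fun p : V × V => σ p.1 ≠ p.2), w p.1 p.2
      = ∑ k ∈ univ.filter (fun k : ZMod (m - 1) => k ≠ 0), ∑ v : V, w v (g k v) := by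
    rw [← Finset.sum_product']
    refine (Finset.sum_bij (fun p _ => (p.2, g p.1 p.2)) ?_ ?_ ?_ ?_).symm
    · rintro ⟨k, v⟩ hp
      simp only [Finset.mem_product, Finset.mem_filter, Finset.mem_univ, true_and,
        and_true] at hp
      refine Finset.mem_filter.mpr ⟨Finset.mem_offDiag.mpr ⟨mem_univ _, mem_univ _, ?_⟩, ?_⟩
      · exact fun h => (hgpm k).2 v h.symm
      · intro h
        rw [hσg v] at h
        have : pmFactor (0 : ZMod (m - 1)) (e v) = pmFactor k (e v) := by
          rw [← hgval, ← hgval, h]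
        exact hp ((pmFactor_inj h2 this).symm)
    · rintro ⟨k, v⟩ hkv ⟨k', v'⟩ hkv' hpe
      simp only [Prod.mk.injEq] at hpe ⊢
      obtain ⟨h1, hgg⟩ := hpe
      subst h1
      refine ⟨?_, rfl⟩
      have : pmFactor k (e v) = pmFactor k' (e v) := by rw [← hgval, ← hgval, hgg]
      exact pmFactor_inj h2 this
    · rintro ⟨u, v⟩ hb
      simp only [Finset.mem_filter, Finset.mem_offDiag] at hb
      obtain ⟨⟨-, -, huv⟩, hσuv⟩ := hb
      have hab : e u ≠ e v := fun h => huv (e.injective h)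
      obtain ⟨k, hk⟩ := pmFactor_exists hdiv hab
      have hgk : g k u = v := e.injective (by rw [hgval, hk])
      have hk0 : k ≠ 0 := by
        rintro rfl
        exact hσuv ((hσg u).trans hgk)
      exact ⟨(k, u), by simp [hk0], by simp [hgk]⟩
    · rintro ⟨k, v⟩ -
      rfl
  have hfil : ∀ k, univ.filter (fun v => g k v ≠ v) = univ := fun k =>
    Finset.filter_true_of_mem (fun v _ => (hgpm k).2 v)
  have hmw : ∀ k : ZMod (m - 1), ∑ v : V, w v (g k v) = 2 * matchingWeight w (g k) := by
    intro k
    rw [matchingWeight, hfil k]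
    ring
  have hcardfil : (univ.filter (fun k : ZMod (m - 1) => k ≠ 0)).card = m - 2 := by
    rw [Finset.filter_ne', Finset.card_erase_of_mem (mem_univ _), Finset.card_univ,
      ZMod.card]
    omega
  calc (1 / 2) * ∑ p ∈ Finset.univ.offDiag.filter (fun p : V × V => σ p.1 ≠ p.2), w p.1 p.2
      = ∑ k ∈ univ.filter (fun k : ZMod (m - 1) => k ≠ 0), matchingWeight w (g k) := by
        rw [key, Finset.mul_sum]
        exact Finset.sum_congr rfl fun k _ => by rw [hmw k]; ring
    _ ≤ ∑ _k ∈ univ.filter (fun k : ZMod (m - 1) => k ≠ 0), S :=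
        Finset.sum_le_sum fun k _ => hle k
    _ = ((m : ℝ) - 2) * S := by
        rw [Finset.sum_const, hcardfil, nsmul_eq_mul]
        congr 1
        rw [Nat.cast_sub hm]
        norm_num
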